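/- Fix a triple (σ,τ₀,τ₁) of permutations in S₃ and let i : ℕ → {0,1} be purely periodic, i.e. there exists p ≥ 1 with i_{m+p} = i_m for all m ≥ 0. Suppose the intersection Δ(i₀,i₁,…) is a singleton {(α,β)} for some α, β ∈ ℝ. Then there exists a subfield K of ℝ with [K : ℚ] ≤ 3 such that α ∈ K and β ∈ K. -/

import Mathlib

open Matrix

noncomputable section

/-- `A₀ = ![![0,0,1],![1,0,0],![0,1,1]]`. -/
def A0 : Matrix (Fin 3) (Fin 3) ℝ := !![0,0,1; 1,0,0; 0,1,1]
/-- `A₁ = ![![1,0,1],![0,1,0],![0,0,1]]`. -/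
def A1 : Matrix (Fin 3) (Fin 3) ℝ := !![1,0,1; 0,1,0; 0,0,1]
/-- `B = ![![1,1,1],![0,1,1],![0,0,1]]`. -/
def Bm : Matrix (Fin 3) (Fin 3) ℝ := !![1,1,1; 0,1,1; 0,0,1]

/-- The permutation matrix of `ρ`: entry `(i,j)` is `1` iff `ρ i = j`.  In particular
`P (finRotate 3)`, the matrix of the cycle `(1 2 3)`, is `![![0,1,0],![0,0,1],![1,0,0]]`. -/
def P (ρ : Equiv.Perm (Fin 3)) : Matrix (Fin 3) (Fin 3) ℝ := ρ.permMatrix ℝ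

/-- The pair of TRIP matrices `F₀ = P_σ·A₀·P_{τ₀}`, `F₁ = P_σ·A₁·P_{τ₁}` of a triple
of permutations, as a function `Fin 2 → Matrix`. -/
def Fmat (σ τ0 τ1 : Equiv.Perm (Fin 3)) : Fin 2 → Matrix (Fin 3) (Fin 3) ℝ :=
  ![P σ * A0 * P τ0, P σ * A1 * P τ1]

/-- `prodMat G n = B · (G 0) · (G 1) ⋯ (G n)`. -/
def prodMat (G : ℕ → Matrix (Fin 3) (Fin 3) ℝ) (n : ℕ) : Matrix (Fin 3) (Fin 3) ℝ :=
  Bm * ((List.range (n+1)).map G).prod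

/-- The triangle `Δ(i₀,…,iₙ)`: the convex hull of the images under
`π(x₀,x₁,x₂) = (x₁/x₀, x₂/x₀)` of the three columns of `M`. -/
def tri (M : Matrix (Fin 3) (Fin 3) ℝ) : Set (ℝ × ℝ) :=
  convexHull ℝ {p | ∃ j : Fin 3, p = (M 1 j / M 0 j, M 2 j / M 0 j)}

/-- `Δ(i₀,i₁,…) = ⋂ₙ Δ(i₀,…,iₙ)`, for the sequence of matrices `G m = F_{i_m}`. -/
def DeltaInf (G : ℕ → Matrix (Fin 3) (Fin 3) ℝ) : Set (ℝ × ℝ) :=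
  ⋂ n : ℕ, tri (prodMat G n)

/-- If the digit sequence `i` is purely periodic and the intersection
`Δ(i₀,i₁,…)` for the TRIP maps of the triple `(σ,τ₀,τ₁)` is the singleton `{(α,β)}`,
then `α` and `β` lie in a common subfield of `ℝ` of degree at most 3 over `ℚ`. -/
abbrev Mat3 := Matrix (Fin 3) (Fin 3) ℝ

def NN (M : Mat3) : Prop := ∀ i j, 0 ≤ M i j
def IsRatM (M : Mat3) : Prop := ∀ i j, ∃ q : ℚ, M i j = (q : ℝ)

lemma nn_mul {M N : Mat3} (hM : NN M) (hN : NN N) : NN (M * N) := by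
  intro i j
  rw [Matrix.mul_apply]
  exact Finset.sum_nonneg fun k _ => mul_nonneg (hM i k) (hN k j)

lemma nn_one : NN 1 := by
  intro i j
  rw [Matrix.one_apply]
  split <;> norm_num

lemma nn_P (ρ : Equiv.Perm (Fin 3)) : NN (P ρ) := by
  intro i j
  unfold P Equiv.Perm.permMatrix PEquiv.toMatrix
  simp only [Matrix.of_apply]
  split <;> norm_num

lemma fin3 {Q : Fin 3 → Prop} (h0 : Q 0) (h1 : Q 1) (h2 : Q 2) : ∀ i, Q i := by
  intro i; fin_cases i; exacts [h0, h1, h2]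

lemma nn_A0 : NN A0 := by apply fin3 <;> apply fin3 <;> norm_num [A0, Matrix.vecHead, Matrix.vecTail, Function.comp, Matrix.cons_val_two]
lemma nn_A1 : NN A1 := by apply fin3 <;> apply fin3 <;> norm_num [A1, Matrix.vecHead, Matrix.vecTail, Function.comp, Matrix.cons_val_two]
lemma nn_Bm : NN Bm := by apply fin3 <;> apply fin3 <;> norm_num [Bm, Matrix.vecHead, Matrix.vecTail, Function.comp, Matrix.cons_val_two]

lemma nn_Fmat (σ τ0 τ1 : Equiv.Perm (Fin 3)) (k : Fin 2) : NN (Fmat σ τ0 τ1 k) := by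
  fin_cases k
  · exact (nn_mul (nn_mul (nn_P σ) nn_A0) (nn_P τ0))
  · exact (nn_mul (nn_mul (nn_P σ) nn_A1) (nn_P τ1))

lemma detP_ne (ρ : Equiv.Perm (Fin 3)) : (P ρ).det ≠ 0 := by
  rw [P, Matrix.det_permutation]
  rcases Int.units_eq_one_or (Equiv.Perm.sign ρ) with h | h <;> rw [h] <;> norm_num

lemma detA0 : A0.det = 1 := by
  rw [Matrix.det_fin_three]
  norm_num [A0, Matrix.vecHead, Matrix.vecTail, Function.comp, Matrix.cons_val_two]
lemma detA1 : A1.det = 1 := by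
  rw [Matrix.det_fin_three]
  norm_num [A1, Matrix.vecHead, Matrix.vecTail, Function.comp, Matrix.cons_val_two]
lemma detBm : Bm.det = 1 := by
  rw [Matrix.det_fin_three]
  norm_num [Bm, Matrix.vecHead, Matrix.vecTail, Function.comp, Matrix.cons_val_two]

lemma detFmat_ne (σ τ0 τ1 : Equiv.Perm (Fin 3)) : ∀ k : Fin 2, (Fmat σ τ0 τ1 k).det ≠ 0
  | 0 => by
      rw [show Fmat σ τ0 τ1 0 = P σ * A0 * P τ0 from rfl, Matrix.det_mul, Matrix.det_mul, detA0]
      exact mul_ne_zero (mul_ne_zero (detP_ne σ) one_ne_zero) (detP_ne τ0)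
  | 1 => by
      rw [show Fmat σ τ0 τ1 1 = P σ * A1 * P τ1 from rfl, Matrix.det_mul, Matrix.det_mul, detA1]
      exact mul_ne_zero (mul_ne_zero (detP_ne σ) one_ne_zero) (detP_ne τ1)

lemma rat_mul {M N : Mat3} (hM : IsRatM M) (hN : IsRatM N) : IsRatM (M * N) := by
  intro i j
  obtain ⟨a0, h0⟩ := hM i 0; obtain ⟨a1, h1⟩ := hM i 1; obtain ⟨a2, h2⟩ := hM i 2
  obtain ⟨b0, g0⟩ := hN 0 j; obtain ⟨b1, g1⟩ := hN 1 j; obtain ⟨b2, g2⟩ := hN 2 j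
  refine ⟨a0*b0 + a1*b1 + a2*b2, ?_⟩
  rw [Matrix.mul_apply, Fin.sum_univ_three, h0, h1, h2, g0, g1, g2]
  push_cast; ring

lemma rat_one : IsRatM 1 := by
  intro i j
  rw [Matrix.one_apply]
  split
  · exact ⟨1, by norm_num⟩
  · exact ⟨0, by norm_num⟩

lemma rat_P (ρ : Equiv.Perm (Fin 3)) : IsRatM (P ρ) := by
  intro i j
  unfold P Equiv.Perm.permMatrix PEquiv.toMatrix
  simp only [Matrix.of_apply]
  split
  · exact ⟨1, by norm_num⟩
  · exact ⟨0, by norm_num⟩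

lemma rat_A0 : IsRatM A0 := by
  apply fin3 <;> apply fin3 <;> first
    | (refine ⟨0, ?_⟩; norm_num [A0, Matrix.vecHead, Matrix.vecTail, Function.comp, Matrix.cons_val_two]; done)
    | (refine ⟨1, ?_⟩; norm_num [A0, Matrix.vecHead, Matrix.vecTail, Function.comp, Matrix.cons_val_two]; done)

lemma rat_A1 : IsRatM A1 := by
  apply fin3 <;> apply fin3 <;> first
    | (refine ⟨0, ?_⟩; norm_num [A1, Matrix.vecHead, Matrix.vecTail, Function.comp, Matrix.cons_val_two]; done)
    | (refine ⟨1, ?_⟩; norm_num [A1, Matrix.vecHead, Matrix.vecTail, Function.comp, Matrix.cons_val_two]; done)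

lemma rat_Bm : IsRatM Bm := by
  apply fin3 <;> apply fin3 <;> first
    | (refine ⟨0, ?_⟩; norm_num [Bm, Matrix.vecHead, Matrix.vecTail, Function.comp, Matrix.cons_val_two]; done)
    | (refine ⟨1, ?_⟩; norm_num [Bm, Matrix.vecHead, Matrix.vecTail, Function.comp, Matrix.cons_val_two]; done)

lemma Bm_inv : Bm⁻¹ = !![1,-1,0; 0,1,-1; 0,0,1] := by
  apply Matrix.inv_eq_right_inv
  show !![(1:ℝ),1,1; 0,1,1; 0,0,1] * _ = _
  norm_num [Matrix.mul_fin_three, Matrix.vecHead, Matrix.vecTail, Function.comp, Matrix.cons_val_two]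
  exact Matrix.one_fin_three.symm

lemma rat_BmInv : IsRatM Bm⁻¹ := by
  rw [Bm_inv]
  apply fin3 <;> apply fin3 <;> first
    | (refine ⟨0, ?_⟩; norm_num [Matrix.vecHead, Matrix.vecTail, Function.comp, Matrix.cons_val_two]; done)
    | (refine ⟨1, ?_⟩; norm_num [Matrix.vecHead, Matrix.vecTail, Function.comp, Matrix.cons_val_two]; done)
    | (refine ⟨-1, ?_⟩; norm_num [Matrix.vecHead, Matrix.vecTail, Function.comp, Matrix.cons_val_two]; done)

lemma rat_Fmat (σ τ0 τ1 : Equiv.Perm (Fin 3)) (k : Fin 2) : IsRatM (Fmat σ τ0 τ1 k) := by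
  fin_cases k
  · exact (rat_mul (rat_mul (rat_P σ) rat_A0) (rat_P τ0))
  · exact (rat_mul (rat_mul (rat_P σ) rat_A1) (rat_P τ1))

lemma nn_listProd (l : List Mat3) (h : ∀ M ∈ l, NN M) : NN l.prod := by
  induction l with
  | nil => simpa using nn_one
  | cons M l ih =>
      rw [List.prod_cons]
      exact nn_mul (h M (List.mem_cons_self (a := M) (l := l))) (ih fun N hN => h N (List.mem_cons_of_mem _ hN))

lemma rat_listProd (l : List Mat3) (h : ∀ M ∈ l, IsRatM M) : IsRatM l.prod := by
  induction l with
  | nil => simpa using rat_one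
  | cons M l ih =>
      rw [List.prod_cons]
      exact rat_mul (h M (List.mem_cons_self (a := M) (l := l))) (ih fun N hN => h N (List.mem_cons_of_mem _ hN))

lemma det_listProd_ne (l : List Mat3) (h : ∀ M ∈ l, M.det ≠ 0) : l.prod.det ≠ 0 := by
  induction l with
  | nil => simp
  | cons M l ih =>
      rw [List.prod_cons, Matrix.det_mul]
      exact mul_ne_zero (h M (List.mem_cons_self (a := M) (l := l))) (ih fun N hN => h N (List.mem_cons_of_mem _ hN))

def vtx (M : Mat3) (j : Fin 3) : ℝ × ℝ := (M 1 j / M 0 j, M 2 j / M 0 j)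


lemma mem_hull_iff {E : Type*} [AddCommGroup E] [Module ℝ E] (f : Fin 3 → E) (x : E) :
    x ∈ convexHull ℝ {p | ∃ j : Fin 3, p = f j} ↔
      ∃ w : Fin 3 → ℝ, (∀ j, 0 ≤ w j) ∧ ∑ j, w j = 1 ∧ ∑ j, w j • f j = x := by
  classical
  constructor
  · intro hx
    rw [convexHull_eq] at hx
    obtain ⟨ι, t, w, z, hw0, hw1, hz, hx⟩ := hx
    have hg : ∀ i, ∃ j : Fin 3, i ∈ t → z i = f j := by
      intro i
      by_cases hi : i ∈ t
      · obtain ⟨j, hj⟩ := hz i hi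
        exact ⟨j, fun _ => hj⟩
      · exact ⟨0, fun h => absurd h hi⟩
    choose g hgz using hg
    refine ⟨fun j => ∑ i ∈ t.filter (fun i => g i = j), w i, ?_, ?_, ?_⟩
    · intro j
      exact Finset.sum_nonneg fun i hi => hw0 i (Finset.mem_filter.mp hi).1
    · rw [Finset.sum_fiberwise t g w, hw1]
    · have key : ∀ j : Fin 3, (∑ i ∈ t.filter (fun i => g i = j), w i) • f j
          = ∑ i ∈ t.filter (fun i => g i = j), w i • z i := by
        intro j
        rw [Finset.sum_smul]
        refine Finset.sum_congr rfl fun i hi => ?_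
        obtain ⟨hit, hgi⟩ := Finset.mem_filter.mp hi
        rw [hgz i hit, hgi]
      rw [← hx, Finset.centerMass_eq_of_sum_1 t z hw1]
      rw [Finset.sum_congr rfl fun j _ => key j]
      exact Finset.sum_fiberwise t g (fun i => w i • z i)
  · rintro ⟨w, hw0, hw1, hx⟩
    have := Finset.centerMass_mem_convexHull (s := {p | ∃ j : Fin 3, p = f j}) Finset.univ
      (w := w) (fun j _ => hw0 j) (by rw [hw1]; norm_num) (z := f) (fun j _ => ⟨j, rfl⟩)
    rwa [Finset.centerMass_eq_of_sum_1 _ f hw1, hx] at this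

lemma mem_tri_iff {M : Mat3} {q : ℝ × ℝ} :
    q ∈ tri M ↔ ∃ w : Fin 3 → ℝ, (∀ j, 0 ≤ w j) ∧ ∑ j, w j = 1 ∧ ∑ j, w j • vtx M j = q :=
  mem_hull_iff (vtx M) q

lemma mulVec_entry (M : Mat3) (c : Fin 3 → ℝ) (r : Fin 3) :
    (M *ᵥ c) r = M r 0 * c 0 + M r 1 * c 1 + M r 2 * c 2 := by
  simp [Matrix.mulVec, dotProduct, Fin.sum_univ_three]

lemma mulVec_pos {M : Mat3} (hM : ∀ j, 0 < M 0 j) {c : Fin 3 → ℝ}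
    (hc : ∀ j, 0 ≤ c j) (hc0 : c ≠ 0) : 0 < (M *ᵥ c) 0 := by
  obtain ⟨j, hj⟩ : ∃ j, 0 < c j := by
    by_contra h
    push_neg at h
    exact hc0 (funext fun j => le_antisymm (h j) (hc j))
  have hsum : (M *ᵥ c) 0 = ∑ k, M 0 k * c k := by
    simp [Matrix.mulVec, dotProduct]
  rw [hsum]
  exact Finset.sum_pos' (fun k _ => mul_nonneg (hM k).le (hc k))
    ⟨j, Finset.mem_univ j, mul_pos (hM j) hj⟩

lemma pi_mem_tri {M : Mat3} (hM : ∀ j, 0 < M 0 j) {c : Fin 3 → ℝ}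
    (hc : ∀ j, 0 ≤ c j) (hc0 : c ≠ 0) :
    ((M *ᵥ c) 1 / (M *ᵥ c) 0, (M *ᵥ c) 2 / (M *ᵥ c) 0) ∈ tri M := by
  have hx0 : 0 < (M *ᵥ c) 0 := mulVec_pos hM hc hc0
  have hz : ∀ j, (M 0 j) ≠ 0 := fun j => (hM j).ne'
  refine mem_tri_iff.mpr ⟨fun j => c j * M 0 j / (M *ᵥ c) 0, ?_, ?_, ?_⟩
  · intro j
    exact div_nonneg (mul_nonneg (hc j) (hM j).le) hx0.le
  · rw [Fin.sum_univ_three]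
    rw [← add_div, ← add_div, div_eq_one_iff_eq hx0.ne']
    rw [mulVec_entry]
    ring
  · have hterm : ∀ r j : Fin 3, c j * M 0 j / (M *ᵥ c) 0 * (M r j / M 0 j)
        = c j * M r j / (M *ᵥ c) 0 := by
      intro r j
      field_simp [hz j, hx0.ne']
    rw [Fin.sum_univ_three]
    unfold vtx
    rw [Prod.ext_iff]
    constructor
    · simp only [Prod.smul_fst, Prod.fst_add, smul_eq_mul]
      rw [hterm 1 0, hterm 1 1, hterm 1 2, ← add_div, ← add_div,
        mulVec_entry M c 1]
      ring
    · simp only [Prod.smul_snd, Prod.snd_add, smul_eq_mul]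
      rw [hterm 2 0, hterm 2 1, hterm 2 2, ← add_div, ← add_div,
        mulVec_entry M c 2]
      ring

lemma lift_of_mem_tri {M : Mat3} (hM : ∀ j, 0 < M 0 j) {q : ℝ × ℝ} (hq : q ∈ tri M) :
    ∃ c : Fin 3 → ℝ, (∀ j, 0 ≤ c j) ∧ c ≠ 0 ∧ M *ᵥ c = ![1, q.1, q.2] := by
  obtain ⟨w, hw0, hw1, hwq⟩ := mem_tri_iff.mp hq
  have hz : ∀ j, (M 0 j) ≠ 0 := fun j => (hM j).ne'
  refine ⟨fun j => w j / M 0 j, fun j => div_nonneg (hw0 j) (hM j).le, ?_, ?_⟩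
  · intro h
    have hww : ∀ j, w j = 0 := by
      intro j
      have := congrFun h j
      simp only [Pi.zero_apply, div_eq_zero_iff] at this
      rcases this with h' | h'
      · exact h'
      · exact absurd h' (hz j)
    rw [Fin.sum_univ_three, hww 0, hww 1, hww 2] at hw1
    norm_num at hw1
  · have h1 := congrArg Prod.fst hwq
    have h2 := congrArg Prod.snd hwq
    simp only [Fin.sum_univ_three, Prod.fst_add, Prod.snd_add, Prod.smul_fst, Prod.smul_snd,
      smul_eq_mul, vtx] at h1 h2
    rw [Fin.sum_univ_three] at hw1
    have hcan : ∀ j : Fin 3, M 0 j * (w j / M 0 j) = w j := fun j => by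
      rw [mul_comm, div_mul_cancel₀ _ (hz j)]
    funext r
    revert r
    refine fin3 ?_ ?_ ?_
    · rw [mulVec_entry]
      show _ = (1 : ℝ)
      rw [hcan 0, hcan 1, hcan 2]
      exact hw1
    · rw [mulVec_entry]
      show _ = q.1
      rw [← h1]; ring
    · rw [mulVec_entry]
      show _ = q.2
      rw [← h2]; ring

lemma between_exists {u v c : ℝ} (h1 : u ≤ c) (h2 : c ≤ v) :
    ∃ θ : ℝ, 0 ≤ θ ∧ θ ≤ 1 ∧ θ * v + (1 - θ) * u = c := by
  rcases eq_or_lt_of_le (le_trans h1 h2) with he | hlt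
  · refine ⟨0, le_rfl, by norm_num, ?_⟩
    have hc : c = u := le_antisymm (he ▸ h2) h1
    rw [hc]; ring
  · have hne : v - u ≠ 0 := sub_ne_zero.mpr hlt.ne'
    refine ⟨(c - u) / (v - u), div_nonneg (by linarith) (by linarith), ?_, ?_⟩
    · rw [div_le_one (by linarith)]; linarith
    · field_simp
      ring

lemma mulVec_zero_of_det {M : Mat3} (hdet : M.det ≠ 0) {c : Fin 3 → ℝ}
    (h : M *ᵥ c = 0) : c = 0 := by
  have h1 : M⁻¹ *ᵥ (M *ᵥ c) = c := by
    rw [Matrix.mulVec_mulVec, Matrix.nonsing_inv_mul M (isUnit_iff_ne_zero.mpr hdet),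
      Matrix.one_mulVec]
  rw [h, Matrix.mulVec_zero] at h1
  exact h1.symm

lemma bary_unique {M : Mat3} (hdet : M.det ≠ 0) (hM : ∀ j, 0 < M 0 j)
    {w w' : Fin 3 → ℝ} (hw : ∑ j, w j = 1) (hw' : ∑ j, w' j = 1)
    (h : ∑ j, w j • vtx M j = ∑ j, w' j • vtx M j) : w = w' := by
  have hz : ∀ j, M 0 j ≠ 0 := fun j => (hM j).ne'
  have h1 := congrArg Prod.fst h
  have h2 := congrArg Prod.snd h
  simp only [Fin.sum_univ_three, Prod.fst_add, Prod.snd_add, Prod.smul_fst, Prod.smul_snd,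
    smul_eq_mul, vtx] at h1 h2
  rw [Fin.sum_univ_three] at hw hw'
  have hcc : ∀ j : Fin 3, M 0 j * ((w j - w' j) / M 0 j) = w j - w' j := fun j => by
    rw [mul_comm, div_mul_cancel₀ _ (hz j)]
  have key : (fun j => (w j - w' j) / M 0 j) = 0 := by
    apply mulVec_zero_of_det hdet
    funext r
    revert r
    refine fin3 ?_ ?_ ?_
    · rw [mulVec_entry]
      show _ = (0:ℝ)
      rw [hcc 0, hcc 1, hcc 2]
      linarith
    · rw [mulVec_entry]
      show _ = (0:ℝ)
      linear_combination h1
    · rw [mulVec_entry]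
      show _ = (0:ℝ)
      linear_combination h2
  funext j
  have := congrFun key j
  simp only [Pi.zero_apply, div_eq_zero_iff] at this
  rcases this with h' | h'
  · linarith
  · exact absurd h' (hz j)

def wt (j k : Fin 3) (θ : ℝ) : Fin 3 → ℝ :=
  fun l => θ * (if l = k then 1 else 0) + (1 - θ) * (if l = j then 1 else 0)

lemma pick (k : Fin 3) (g : Fin 3 → ℝ) :
    (if (0:Fin 3) = k then (1:ℝ) else 0) * g 0 + (if (1:Fin 3) = k then (1:ℝ) else 0) * g 1
      + (if (2:Fin 3) = k then (1:ℝ) else 0) * g 2 = g k := by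
  fin_cases k <;> simp

lemma wt_sum (j k : Fin 3) (θ : ℝ) : ∑ l, wt j k θ l = 1 := by
  rw [Fin.sum_univ_three]
  unfold wt
  have hk := pick k (fun _ => (1:ℝ))
  have hj := pick j (fun _ => (1:ℝ))
  simp only [mul_one] at hk hj
  linear_combination θ * hk + (1 - θ) * hj

lemma wt_nonneg (j k : Fin 3) {θ : ℝ} (h0 : 0 ≤ θ) (h1 : θ ≤ 1) (l : Fin 3) :
    0 ≤ wt j k θ l := by
  unfold wt
  have hk : (0:ℝ) ≤ (if l = k then (1:ℝ) else 0) := by split <;> norm_num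
  have hj : (0:ℝ) ≤ (if l = j then (1:ℝ) else 0) := by split <;> norm_num
  have h1' : (0:ℝ) ≤ 1 - θ := by linarith
  exact add_nonneg (mul_nonneg h0 hk) (mul_nonneg h1' hj)

lemma wt_comb (M : Mat3) (j k : Fin 3) (θ : ℝ) :
    ∑ l, wt j k θ l • vtx M l = θ • vtx M k + (1 - θ) • vtx M j := by
  rw [Fin.sum_univ_three]
  unfold wt
  rw [Prod.ext_iff]
  constructor
  · simp only [Prod.smul_fst, Prod.fst_add, smul_eq_mul]
    rw [← pick k (fun l => (vtx M l).1), ← pick j (fun l => (vtx M l).1)]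
    ring
  · simp only [Prod.smul_snd, Prod.snd_add, smul_eq_mul]
    rw [← pick k (fun l => (vtx M l).2), ← pick j (fun l => (vtx M l).2)]
    ring

lemma third_index : ∀ (u v : Fin 3), u ≠ v → ∃ m, m ≠ u ∧ m ≠ v := by decide

lemma line_vertex {M : Mat3} (hdet : M.det ≠ 0) (hM : ∀ j, 0 < M 0 j)
    {x : ℝ × ℝ} (hx : x ∈ tri M) {d1 d2 : ℝ} (hd : d1 ≠ 0 ∨ d2 ≠ 0)
    (hline : ∀ t : ℝ, (x.1 + t * d1, x.2 + t * d2) ∈ tri M → t = 0) :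
    ∃ j, x = vtx M j := by
  have huniq : ∀ y ∈ tri M, d2 * y.1 - d1 * y.2 = d2 * x.1 - d1 * x.2 → y = x := by
    intro y hy hxy
    rcases hd with hd1 | hd2
    · have hy1 : y.1 = x.1 + ((y.1 - x.1) / d1) * d1 := by field_simp; ring
      have hy2 : y.2 = x.2 + ((y.1 - x.1) / d1) * d2 := by
        field_simp
        linear_combination -hxy
      have ht := hline ((y.1 - x.1) / d1) (by rw [← hy1, ← hy2]; exact hy)
      have e1 : y.1 = x.1 := by rw [hy1, ht]; ring
      have e2 : y.2 = x.2 := by rw [hy2, ht]; ring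
      exact Prod.ext e1 e2
    · have hy2 : y.2 = x.2 + ((y.2 - x.2) / d2) * d2 := by field_simp; ring
      have hy1 : y.1 = x.1 + ((y.2 - x.2) / d2) * d1 := by
        field_simp
        linear_combination hxy
      have ht := hline ((y.2 - x.2) / d2) (by rw [← hy1, ← hy2]; exact hy)
      have e1 : y.1 = x.1 := by rw [hy1, ht]; ring
      have e2 : y.2 = x.2 := by rw [hy2, ht]; ring
      exact Prod.ext e1 e2
  obtain ⟨s, hs0, hs1, hsx⟩ := mem_tri_iff.mp hx
  set F : Fin 3 → ℝ := fun j => d2 * (vtx M j).1 - d1 * (vtx M j).2 with hF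
  rw [Fin.sum_univ_three] at hs1
  have hcx : d2 * x.1 - d1 * x.2 = s 0 * F 0 + s 1 * F 1 + s 2 * F 2 := by
    have h1 := congrArg Prod.fst hsx
    have h2 := congrArg Prod.snd hsx
    simp only [Fin.sum_univ_three, Prod.fst_add, Prod.snd_add, Prod.smul_fst, Prod.smul_snd,
      smul_eq_mul] at h1 h2
    rw [← h1, ← h2, hF]
    ring
  obtain ⟨jmax, -, hjmax⟩ := Finset.exists_max_image Finset.univ F ⟨0, Finset.mem_univ 0⟩
  obtain ⟨jmin, -, hjmin⟩ := Finset.exists_min_image Finset.univ F ⟨0, Finset.mem_univ 0⟩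
  have hcmax : d2 * x.1 - d1 * x.2 ≤ F jmax := by
    have e : (s 0 + s 1 + s 2) * F jmax = F jmax := by rw [hs1]; ring
    have m0 := mul_le_mul_of_nonneg_left (hjmax 0 (Finset.mem_univ 0)) (hs0 0)
    have m1 := mul_le_mul_of_nonneg_left (hjmax 1 (Finset.mem_univ 1)) (hs0 1)
    have m2 := mul_le_mul_of_nonneg_left (hjmax 2 (Finset.mem_univ 2)) (hs0 2)
    nlinarith [hcx, e, m0, m1, m2]
  have hcmin : F jmin ≤ d2 * x.1 - d1 * x.2 := by
    have e : (s 0 + s 1 + s 2) * F jmin = F jmin := by rw [hs1]; ring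
    have m0 := mul_le_mul_of_nonneg_left (hjmin 0 (Finset.mem_univ 0)) (hs0 0)
    have m1 := mul_le_mul_of_nonneg_left (hjmin 1 (Finset.mem_univ 1)) (hs0 1)
    have m2 := mul_le_mul_of_nonneg_left (hjmin 2 (Finset.mem_univ 2)) (hs0 2)
    nlinarith [hcx, e, m0, m1, m2]
  have main : ∀ (j k : Fin 3), F j ≤ d2 * x.1 - d1 * x.2 → d2 * x.1 - d1 * x.2 ≤ F k →
      ∃ θ : ℝ, 0 ≤ θ ∧ θ ≤ 1 ∧ s = wt j k θ := by
    intro j k hj hk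
    obtain ⟨θ, h0, h1, hθ⟩ := between_exists hj hk
    have hmem : (∑ l, wt j k θ l • vtx M l) ∈ tri M :=
      mem_tri_iff.mpr ⟨wt j k θ, wt_nonneg j k h0 h1, wt_sum j k θ, rfl⟩
    have hval : d2 * (∑ l, wt j k θ l • vtx M l).1 - d1 * (∑ l, wt j k θ l • vtx M l).2
        = d2 * x.1 - d1 * x.2 := by
      rw [wt_comb]
      simp only [Prod.fst_add, Prod.snd_add, Prod.smul_fst, Prod.smul_snd, smul_eq_mul]
      rw [← hθ, hF]
      ring
    have hxeq := huniq _ hmem hval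
    refine ⟨θ, h0, h1, ?_⟩
    refine bary_unique hdet hM ?_ (wt_sum j k θ) ?_
    · rw [Fin.sum_univ_three]; exact hs1
    · rw [hsx, hxeq]
  obtain ⟨θ, hθ0, hθ1, hseq⟩ := main jmin jmax hcmin hcmax
  have hxcomb : x = θ • vtx M jmax + (1 - θ) • vtx M jmin := by
    rw [← hsx, hseq, wt_comb]
  by_cases hjj : jmax = jmin
  · refine ⟨jmin, ?_⟩
    rw [hxcomb, hjj, ← add_smul]
    norm_num
  by_cases hθz : θ = 0
  · refine ⟨jmin, ?_⟩
    rw [hxcomb, hθz]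
    norm_num
  by_cases hθo : θ = 1
  · refine ⟨jmax, ?_⟩
    rw [hxcomb, hθo]
    norm_num
  exfalso
  obtain ⟨m, hmu, hmv⟩ := third_index jmax jmin hjj
  rcases le_total (F m) (d2 * x.1 - d1 * x.2) with hm | hm
  · obtain ⟨θ', -, -, hseq'⟩ := main m jmax hm hcmax
    have hne1 : jmin ≠ jmax := fun h => hjj h.symm
    have e1 := congrFun hseq jmin
    have e2 := congrFun hseq' jmin
    simp only [wt, if_neg hne1, if_neg (Ne.symm hmv), if_true] at e1 e2
    apply hθo
    have hv1 : s jmin = 1 - θ := by rw [e1]; ring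
    have hv2 : s jmin = 0 := by rw [e2]; ring
    linarith
  · obtain ⟨θ', -, -, hseq'⟩ := main jmin m hcmin hm
    have e1 := congrFun hseq jmax
    have e2 := congrFun hseq' jmax
    simp only [wt, if_neg hjj, if_neg (Ne.symm hmu), if_true] at e1 e2
    apply hθz
    have hv1 : s jmax = θ := by rw [e1]; ring
    have hv2 : s jmax = 0 := by rw [e2]; ring
    linarith

lemma col_eq_mulVec (M N : Mat3) (j r : Fin 3) :
    (M * N) r j = (M *ᵥ (fun k => N k j)) r := by
  simp [Matrix.mul_apply, Matrix.mulVec, dotProduct]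

lemma col_ne_zero {N : Mat3} (hdet : N.det ≠ 0) (j : Fin 3) : (fun k => N k j) ≠ 0 := by
  intro h
  exact hdet (Matrix.det_eq_zero_of_column_eq_zero j (fun i => congrFun h i))

lemma row0_pos_mul {M N : Mat3} (hM : ∀ j, 0 < M 0 j) (hN : NN N)
    (hdet : N.det ≠ 0) (j : Fin 3) : 0 < (M * N) 0 j := by
  rw [col_eq_mulVec]
  exact mulVec_pos hM (fun k => hN k j) (col_ne_zero hdet j)

lemma tri_mul_subset {M N : Mat3} (hM : ∀ j, 0 < M 0 j) (hN : NN N)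
    (hdet : N.det ≠ 0) : tri (M * N) ⊆ tri M := by
  unfold tri
  apply convexHull_min ?_ (convex_convexHull ℝ _)
  rintro q ⟨j, rfl⟩
  rw [col_eq_mulVec M N j 1, col_eq_mulVec M N j 0, col_eq_mulVec M N j 2]
  exact pi_mem_tri hM (fun k => hN k j) (col_ne_zero hdet j)

theorem purelyPeriodic_singleton_cubic
    (σ τ0 τ1 : Equiv.Perm (Fin 3)) (i : ℕ → Fin 2) (p : ℕ) (hp : 1 ≤ p)
    (hper : ∀ m, i (m + p) = i m) (α β : ℝ)
    (hsing : DeltaInf (fun m => Fmat σ τ0 τ1 (i m)) = {(α, β)}) :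
    ∃ K : IntermediateField ℚ ℝ,
      FiniteDimensional ℚ K ∧ Module.finrank ℚ K ≤ 3 ∧ α ∈ K ∧ β ∈ K := by
  classical
  set G : ℕ → Matrix (Fin 3) (Fin 3) ℝ := fun m => Fmat σ τ0 τ1 (i m) with hG
  have hGnn : ∀ m, NN (G m) := fun m => nn_Fmat σ τ0 τ1 (i m)
  have hGdet : ∀ m, (G m).det ≠ 0 := fun m => detFmat_ne σ τ0 τ1 (i m)
  have hGrat : ∀ m, IsRatM (G m) := fun m => rat_Fmat σ τ0 τ1 (i m)
  have hBrow : ∀ j : Fin 3, 0 < Bm 0 j := by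
    refine fin3 ?_ ?_ ?_ <;> norm_num [Bm, Matrix.cons_val_two]
  have hlnn : ∀ n : ℕ, NN (((List.range n).map G).prod) := by
    intro n
    apply nn_listProd
    intro M hM
    obtain ⟨m, -, rfl⟩ := List.mem_map.mp hM
    exact hGnn m
  have hldet : ∀ n : ℕ, (((List.range n).map G).prod).det ≠ 0 := by
    intro n
    apply det_listProd_ne
    intro M hM
    obtain ⟨m, -, rfl⟩ := List.mem_map.mp hM
    exact hGdet m
  have hlrat : ∀ n : ℕ, IsRatM (((List.range n).map G).prod) := by
    intro n
    apply rat_listProd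
    intro M hM
    obtain ⟨m, -, rfl⟩ := List.mem_map.mp hM
    exact hGrat m
  have hrow : ∀ n (j : Fin 3), 0 < prodMat G n 0 j := by
    intro n j
    exact row0_pos_mul hBrow (hlnn (n+1)) (hldet (n+1)) j
  have hdetP : ∀ n, (prodMat G n).det ≠ 0 := by
    intro n
    unfold prodMat
    rw [Matrix.det_mul, detBm, one_mul]
    exact hldet (n+1)
  have hratP : ∀ n, IsRatM (prodMat G n) := fun n => rat_mul rat_Bm (hlrat (n+1))
  have hstep : ∀ n, prodMat G (n+1) = prodMat G n * G (n+1) := by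
    intro n
    unfold prodMat
    rw [List.range_succ, List.map_append, List.prod_append, List.map_singleton,
      List.prod_singleton, Matrix.mul_assoc]
  have hmono : ∀ n, tri (prodMat G (n+1)) ⊆ tri (prodMat G n) := by
    intro n
    rw [hstep n]
    exact tri_mul_subset (hrow n) (hGnn (n+1)) (hGdet (n+1))
  have hmono' : ∀ m n, m ≤ n → tri (prodMat G n) ⊆ tri (prodMat G m) := by
    intro m n h
    induction n, h using Nat.le_induction with
    | base => exact subset_rfl
    | succ n hn ih => exact (hmono n).trans ih
  have hBu : IsUnit Bm.det := by rw [detBm]; exact isUnit_one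
  set Cmat : Matrix (Fin 3) (Fin 3) ℝ := Bm * ((List.range p).map G).prod * Bm⁻¹ with hCdef
  have hCmul : ∀ n, Cmat * prodMat G n = prodMat G (n + p) := by
    intro n
    have hGp : ∀ x, G (p + x) = G x := by
      intro x
      show Fmat σ τ0 τ1 (i (p + x)) = Fmat σ τ0 τ1 (i x)
      rw [add_comm, hper x]
    have hsplit : ((List.range (n+p+1)).map G).prod
        = ((List.range p).map G).prod * ((List.range (n+1)).map G).prod := by
      rw [show n+p+1 = p+(n+1) from by omega, List.range_add, List.map_append,
        List.prod_append, List.map_map]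
      rw [show (G ∘ fun x => p + x) = G from funext hGp]
    show Bm * ((List.range p).map G).prod * Bm⁻¹ * prodMat G n = prodMat G (n+p)
    unfold prodMat
    rw [hsplit, Matrix.mul_assoc (Bm * ((List.range p).map G).prod) Bm⁻¹ _,
      ← Matrix.mul_assoc Bm⁻¹ Bm _, Matrix.nonsing_inv_mul Bm hBu, Matrix.one_mul,
      Matrix.mul_assoc]
  have hCrat : IsRatM Cmat := rat_mul (rat_mul rat_Bm (hlrat p)) rat_BmInv
  have hmemtri : ∀ n, (α, β) ∈ tri (prodMat G n) := by
    intro n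
    have hin : (α, β) ∈ DeltaInf G := by rw [hsing]; rfl
    exact Set.mem_iInter.mp hin n
  have hsingleton : ∀ q : ℝ × ℝ, (∀ n, q ∈ tri (prodMat G n)) → q = (α, β) := by
    intro q hq
    have : q ∈ DeltaInf G := Set.mem_iInter.mpr hq
    rwa [hsing] at this
  have hlift : ∀ n, ∃ c : Fin 3 → ℝ, (∀ j, 0 ≤ c j) ∧ c ≠ 0 ∧
      prodMat G n *ᵥ c = ![1, α, β] := by
    intro n
    exact lift_of_mem_tri (hrow n) (hmemtri n)
  set v : Fin 3 → ℝ := ![1, α, β] with hvdef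
  set lam : ℝ := (Cmat *ᵥ v) 0 with hlam
  obtain ⟨c0, hc00, hc01, hc02⟩ := hlift 0
  have hCv0 : Cmat *ᵥ v = prodMat G (0 + p) *ᵥ c0 := by
    rw [← hc02, Matrix.mulVec_mulVec, hCmul 0]
  have hlam_pos : 0 < lam := by
    rw [hlam, hCv0]
    exact mulVec_pos (hrow (0+p)) hc00 hc01
  have hpiCv : ∀ n, ((Cmat *ᵥ v) 1 / (Cmat *ᵥ v) 0, (Cmat *ᵥ v) 2 / (Cmat *ᵥ v) 0)
      ∈ tri (prodMat G n) := by
    intro n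
    obtain ⟨c, hc0, hc1, hc2⟩ := hlift n
    have hCvn : Cmat *ᵥ v = prodMat G (n + p) *ᵥ c := by
      rw [← hc2, Matrix.mulVec_mulVec, hCmul n]
    rw [hCvn]
    exact hmono' n (n+p) (Nat.le_add_right n p) (pi_mem_tri (hrow (n+p)) hc0 hc1)
  have heqp := hsingleton _ hpiCv
  have hE1 : (Cmat *ᵥ v) 1 / lam = α := congrArg Prod.fst heqp
  have hE2 : (Cmat *ᵥ v) 2 / lam = β := congrArg Prod.snd heqp
  have heig : Cmat *ᵥ v = lam • v := by
    funext r
    revert r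
    refine fin3 ?_ ?_ ?_
    · show (Cmat *ᵥ v) 0 = lam * v 0
      show lam = lam * v 0
      show lam = lam * 1
      rw [mul_one]
    · show (Cmat *ᵥ v) 1 = lam * v 1
      show (Cmat *ᵥ v) 1 = lam * α
      rw [← hE1, mul_comm, div_mul_cancel₀ _ hlam_pos.ne']
    · show (Cmat *ᵥ v) 2 = lam * v 2
      show (Cmat *ᵥ v) 2 = lam * β
      rw [← hE2, mul_comm, div_mul_cancel₀ _ hlam_pos.ne']
  -- row equations
  have hv0 : v 0 = 1 := rfl
  have hv1 : v 1 = α := rfl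
  have hv2 : v 2 = β := rfl
  have hrow_eq : ∀ r : Fin 3, Cmat r 0 + Cmat r 1 * α + Cmat r 2 * β = lam * v r := by
    intro r
    have t0 := congrFun heig r
    rw [mulVec_entry] at t0
    rw [hv0, hv1, hv2] at t0
    rw [show (lam • v) r = lam * v r from rfl] at t0
    linarith [t0]
  have h0 : Cmat 0 0 + Cmat 0 1 * α + Cmat 0 2 * β = lam := by
    have := hrow_eq 0
    rwa [hv0, mul_one] at this
  have h1 : Cmat 1 0 + Cmat 1 1 * α + Cmat 1 2 * β = lam * α := by
    have := hrow_eq 1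
    rwa [hv1] at this
  have h2 : Cmat 2 0 + Cmat 2 1 * α + Cmat 2 2 * β = lam * β := by
    have := hrow_eq 2
    rwa [hv2] at this
  -- algebraicity of lam
  have hvne : v ≠ 0 := by
    intro h
    have := congrFun h 0
    rw [hv0] at this
    exact one_ne_zero this
  have hdet0 : (lam • (1 : Matrix (Fin 3) (Fin 3) ℝ) - Cmat).det = 0 := by
    rw [← Matrix.exists_mulVec_eq_zero_iff]
    refine ⟨v, hvne, ?_⟩
    rw [Matrix.sub_mulVec, Matrix.smul_mulVec, Matrix.one_mulVec, heig, sub_self]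
  obtain ⟨q00, hq00⟩ := hCrat 0 0
  obtain ⟨q01, hq01⟩ := hCrat 0 1
  obtain ⟨q02, hq02⟩ := hCrat 0 2
  obtain ⟨q10, hq10⟩ := hCrat 1 0
  obtain ⟨q11, hq11⟩ := hCrat 1 1
  obtain ⟨q12, hq12⟩ := hCrat 1 2
  obtain ⟨q20, hq20⟩ := hCrat 2 0
  obtain ⟨q21, hq21⟩ := hCrat 2 1
  obtain ⟨q22, hq22⟩ := hCrat 2 2
  rw [Matrix.det_fin_three] at hdet0
  simp only [Matrix.sub_apply, Matrix.smul_apply, Matrix.one_apply, smul_eq_mul] at hdet0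
  simp only [Fin.isValue, if_true, if_neg (by decide : ¬(0:Fin 3) = 1),
    if_neg (by decide : ¬(0:Fin 3) = 2), if_neg (by decide : ¬(1:Fin 3) = 0),
    if_neg (by decide : ¬(1:Fin 3) = 2), if_neg (by decide : ¬(2:Fin 3) = 0),
    if_neg (by decide : ¬(2:Fin 3) = 1), if_pos rfl, mul_one, mul_zero, zero_sub] at hdet0
  rw [hq00, hq01, hq02, hq10, hq11, hq12, hq20, hq21, hq22] at hdet0
  set e2 : ℚ := -(q00 + q11 + q22) with he2
  set e1 : ℚ := q00*q11 - q01*q10 + q00*q22 - q02*q20 + q11*q22 - q12*q21 with he1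
  set e0 : ℚ := -(q00*(q11*q22 - q12*q21) - q01*(q10*q22 - q12*q20)
      + q02*(q10*q21 - q11*q20)) with he0
  set χ : Polynomial ℚ := Polynomial.X^3 + (Polynomial.C e2 * Polynomial.X^2
      + Polynomial.C e1 * Polynomial.X + Polynomial.C e0) with hχ
  have hmonic : χ.Monic := by
    rw [hχ]
    apply Polynomial.monic_X_pow_add
    refine lt_of_le_of_lt Polynomial.degree_quadratic_le ?_
    exact_mod_cast (by norm_num : (2:ℕ) < 3)
  have haev : Polynomial.aeval lam χ = 0 := by
    rw [hχ]
    simp only [map_add, _root_.map_mul, map_pow, Polynomial.aeval_X, Polynomial.aeval_C]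
    rw [eq_ratCast (algebraMap ℚ ℝ) e2, eq_ratCast (algebraMap ℚ ℝ) e1,
      eq_ratCast (algebraMap ℚ ℝ) e0, he2, he1, he0]
    push_cast
    linear_combination hdet0
  have hint : IsIntegral ℚ lam := ⟨χ, hmonic, by rwa [← Polynomial.aeval_def]⟩
  have hdeg3 : χ.natDegree ≤ 3 := by
    rw [hχ]
    refine le_trans (Polynomial.natDegree_add_le _ _) (max_le ?_ ?_)
    · rw [Polynomial.natDegree_X_pow]
    · exact le_trans Polynomial.natDegree_quadratic_le (by norm_num)
  set K : IntermediateField ℚ ℝ := IntermediateField.adjoin ℚ {lam} with hK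
  have hlamK : lam ∈ K := IntermediateField.mem_adjoin_simple_self ℚ lam
  have hQK : ∀ q : ℚ, (q : ℝ) ∈ K := fun q => SubfieldClass.ratCast_mem K q
  have hCK : ∀ r s : Fin 3, Cmat r s ∈ K := by
    intro r s
    obtain ⟨q, hq⟩ := hCrat r s
    rw [hq]
    exact hQK q
  have hrank : Module.finrank ℚ K ≤ 3 := by
    rw [hK, IntermediateField.adjoin.finrank hint]
    exact le_trans (Polynomial.natDegree_le_of_dvd (minpoly.dvd ℚ lam haev)
      hmonic.ne_zero) hdeg3
  have hfd : FiniteDimensional ℚ K := IntermediateField.adjoin.finiteDimensional hint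
  -- the linear system
  set a : Fin 3 → ℝ := ![Cmat 0 1, Cmat 1 1 - lam, Cmat 2 1] with ha
  set b : Fin 3 → ℝ := ![Cmat 0 2, Cmat 1 2, Cmat 2 2 - lam] with hb
  set ee : Fin 3 → ℝ := ![lam - Cmat 0 0, -(Cmat 1 0), -(Cmat 2 0)] with hee
  have ha0 : a 0 = Cmat 0 1 := rfl
  have ha1 : a 1 = Cmat 1 1 - lam := rfl
  have ha2 : a 2 = Cmat 2 1 := rfl
  have hb0 : b 0 = Cmat 0 2 := rfl
  have hb1 : b 1 = Cmat 1 2 := rfl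
  have hb2 : b 2 = Cmat 2 2 - lam := rfl
  have hee0 : ee 0 = lam - Cmat 0 0 := rfl
  have hee1 : ee 1 = -(Cmat 1 0) := rfl
  have hee2 : ee 2 = -(Cmat 2 0) := rfl
  have heqr : ∀ r, a r * α + b r * β = ee r := by
    refine fin3 ?_ ?_ ?_
    · rw [ha0, hb0, hee0]
      linear_combination h0
    · rw [ha1, hb1, hee1]
      linear_combination h1
    · rw [ha2, hb2, hee2]
      linear_combination h2
  have haK : ∀ r, a r ∈ K := by
    refine fin3 ?_ ?_ ?_
    · rw [ha0]; exact hCK 0 1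
    · rw [ha1]; exact sub_mem (hCK 1 1) hlamK
    · rw [ha2]; exact hCK 2 1
  have hbK : ∀ r, b r ∈ K := by
    refine fin3 ?_ ?_ ?_
    · rw [hb0]; exact hCK 0 2
    · rw [hb1]; exact hCK 1 2
    · rw [hb2]; exact sub_mem (hCK 2 2) hlamK
  have heeK : ∀ r, ee r ∈ K := by
    refine fin3 ?_ ?_ ?_
    · rw [hee0]; exact sub_mem hlamK (hCK 0 0)
    · rw [hee1]; exact neg_mem (hCK 1 0)
    · rw [hee2]; exact neg_mem (hCK 2 0)
  have hmain : α ∈ K ∧ β ∈ K := by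
    by_cases hD : ∃ r s : Fin 3, a r * b s - a s * b r ≠ 0
    · obtain ⟨r, s, hrs⟩ := hD
      constructor
      · have hval : α = (ee r * b s - ee s * b r) / (a r * b s - a s * b r) := by
          rw [eq_div_iff hrs]
          linear_combination b s * heqr r - b r * heqr s
        rw [hval]
        exact div_mem (sub_mem (mul_mem (heeK r) (hbK s)) (mul_mem (heeK s) (hbK r)))
          (sub_mem (mul_mem (haK r) (hbK s)) (mul_mem (haK s) (hbK r)))
      · have hval : β = (a r * ee s - a s * ee r) / (a r * b s - a s * b r) := by
          rw [eq_div_iff hrs]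
          linear_combination a r * heqr s - a s * heqr r
        rw [hval]
        exact div_mem (sub_mem (mul_mem (haK r) (heeK s)) (mul_mem (haK s) (heeK r)))
          (sub_mem (mul_mem (haK r) (hbK s)) (mul_mem (haK s) (hbK r)))
    · push_neg at hD
      have key : ∀ d1 d2 : ℝ, (d1 ≠ 0 ∨ d2 ≠ 0) → d1 ∈ K → d2 ∈ K →
          (∀ s : Fin 3, a s * d1 + b s * d2 = 0) → α ∈ K ∧ β ∈ K := by
        intro d1 d2 hdne hd1K hd2K hker
        have hk0 : Cmat 0 1 * d1 + Cmat 0 2 * d2 = 0 := by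
          have := hker 0
          rwa [ha0, hb0] at this
        have hk1 : (Cmat 1 1 - lam) * d1 + Cmat 1 2 * d2 = 0 := by
          have := hker 1
          rwa [ha1, hb1] at this
        have hk2 : Cmat 2 1 * d1 + (Cmat 2 2 - lam) * d2 = 0 := by
          have := hker 2
          rwa [ha2, hb2] at this
        have hlineig : ∀ t : ℝ, Cmat *ᵥ ![1, α + t*d1, β + t*d2]
            = lam • ![1, α + t*d1, β + t*d2] := by
          intro t
          funext r
          revert r
          refine fin3 ?_ ?_ ?_
          · rw [mulVec_entry]
            show Cmat 0 0 * 1 + Cmat 0 1 * (α + t*d1) + Cmat 0 2 * (β + t*d2) = lam * 1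
            linear_combination h0 + t * hk0
          · rw [mulVec_entry]
            show Cmat 1 0 * 1 + Cmat 1 1 * (α + t*d1) + Cmat 1 2 * (β + t*d2) = lam * (α + t*d1)
            linear_combination h1 + t * hk1
          · rw [mulVec_entry]
            show Cmat 2 0 * 1 + Cmat 2 1 * (α + t*d1) + Cmat 2 2 * (β + t*d2) = lam * (β + t*d2)
            linear_combination h2 + t * hk2
        have hmemline : ∀ t : ℝ, ((α + t*d1, β + t*d2) ∈ tri (prodMat G 0)) → t = 0 := by
          intro t hmem0
          have hall : ∀ k : ℕ, (α + t*d1, β + t*d2) ∈ tri (prodMat G (k*p)) := by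
            intro k
            induction k with
            | zero => simpa using hmem0
            | succ k ih =>
                obtain ⟨c, hcn, hcz, hcv⟩ := lift_of_mem_tri (hrow (k*p)) ih
                have hcv' : prodMat G (k*p) *ᵥ c = ![1, α + t*d1, β + t*d2] := hcv
                have hCvv : Cmat *ᵥ ![1, α + t*d1, β + t*d2] = prodMat G (k*p+p) *ᵥ c := by
                  rw [← hcv', Matrix.mulVec_mulVec, hCmul (k*p)]
                have hvec : prodMat G (k*p+p) *ᵥ (lam⁻¹ • c) = ![1, α + t*d1, β + t*d2] := by
                  rw [Matrix.mulVec_smul, ← hCvv, hlineig t, smul_smul,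
                    inv_mul_cancel₀ hlam_pos.ne', one_smul]
                have hmem2 := pi_mem_tri (hrow (k*p+p)) (c := lam⁻¹ • c)
                  (fun j => mul_nonneg (inv_nonneg.mpr hlam_pos.le) (hcn j))
                  (smul_ne_zero (inv_ne_zero hlam_pos.ne') hcz)
                rw [hvec] at hmem2
                have hco : (k+1)*p = k*p+p := by ring
                rw [hco]
                simpa using hmem2
          have hstar := hsingleton (α + t*d1, β + t*d2) (fun n =>
            hmono' n (n*p) (Nat.le_mul_of_pos_right n (by omega)) (hall n))
          have ht1 : α + t*d1 = α := congrArg Prod.fst hstar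
          have ht2 : β + t*d2 = β := congrArg Prod.snd hstar
          rcases hdne with hne | hne
          · have hz : t * d1 = 0 := by linarith
            rcases mul_eq_zero.mp hz with h | h
            exacts [h, absurd h hne]
          · have hz : t * d2 = 0 := by linarith
            rcases mul_eq_zero.mp hz with h | h
            exacts [h, absurd h hne]
        have hvx := line_vertex (hdetP 0) (hrow 0) (hmemtri 0) hdne hmemline
        obtain ⟨j, hj⟩ := hvx
        have hα : α = prodMat G 0 1 j / prodMat G 0 0 j := congrArg Prod.fst hj
        have hβ : β = prodMat G 0 2 j / prodMat G 0 0 j := congrArg Prod.snd hj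
        obtain ⟨qa, hqa⟩ := hratP 0 1 j
        obtain ⟨qb, hqb⟩ := hratP 0 0 j
        obtain ⟨qc, hqc⟩ := hratP 0 2 j
        constructor
        · rw [hα, hqa, hqb]
          exact div_mem (hQK qa) (hQK qb)
        · rw [hβ, hqc, hqb]
          exact div_mem (hQK qc) (hQK qb)
      by_cases hex : ∃ r, a r ≠ 0
      · obtain ⟨r, har⟩ := hex
        refine key (b r) (-(a r)) (Or.inr (neg_ne_zero.mpr har)) (hbK r) (neg_mem (haK r)) ?_
        intro s
        linear_combination hD s r
      · push_neg at hex
        refine key 1 0 (Or.inl one_ne_zero) (one_mem K) (zero_mem K) ?_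
        intro s
        rw [hex s]
        ring
  exact ⟨K, hfd, hrank, hmain.1, hmain.2⟩
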